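/- Let X̃₁, X̃₂, S, Z₃ be jointly Gaussian zero-mean, X̃₁ of variance γP₁ independent of (X̃₂,S,Z₃), X̃₂ of variance θP₂ with E[X̃₂S]=ρ'₂ₛ√(θP₂Q), S of variance Q, Z₃~N(0,N₃) independent of the rest. Define P'₂=θP₂(1−ρ'₂ₛ²), Q'=(√Q+ρ'₂ₛ√(θP₂))², U₂ = X̃₂ + [α'(1+ρ'₂ₛ√(θP₂/Q)) − ρ'₂ₛ√(θP₂/Q)]·S for α'∈ℝ, and Ỹ₃ = X̃₂+S+Z₃. Then I(X̃₁; X̃₁+Ỹ₃ | U₂) = ½·log₂(1 + γP₁/(N₃ + Φ)) where Φ = P'₂Q'(1−α')²/(P'₂+α'²Q'), provided P'₂+α'²Q' > 0. -/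

import Mathlib

open RealInnerProductSpace

/-- Gram matrix of a finite family of vectors (covariance matrix of zero-mean
jointly Gaussian random variables modeled as elements of an inner product space). -/
noncomputable def gramM {V : Type*} [NormedAddCommGroup V] [InnerProductSpace ℝ V] {n : ℕ}
    (v : Fin n → V) : Matrix (Fin n) (Fin n) ℝ := Matrix.of fun i j => ⟪v i, v j⟫

/-- (Conditional) mutual information `I(x ; y | z)` of jointly Gaussian zero-mean random
variables, expressed by the standard Gaussian determinant formula (base-2 logarithm). -/
noncomputable def gMI {V : Type*} [NormedAddCommGroup V] [InnerProductSpace ℝ V] {a b c : ℕ}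
    (x : Fin a → V) (y : Fin b → V) (z : Fin c → V) : ℝ :=
  (1/2) * Real.logb 2 (((gramM (Fin.append x z)).det * (gramM (Fin.append y z)).det) /
    ((gramM (Fin.append x (Fin.append y z))).det * (gramM z).det))

set_option maxHeartbeats 1000000 in
/-- `I(X̃₁; X̃₁ + Ỹ₃ | U₂) = ½ log₂(1 + γP₁/(N₃ + Φ))` with
`Φ = P₂'Q'(1-α')²/(P₂' + α'²Q')`, for the generalized dirty-paper coding auxiliary
`U₂ = X̃₂ + [α'(1+ρ'₂ₛ√(θP₂/Q)) - ρ'₂ₛ√(θP₂/Q)]S` and `Ỹ₃ = X̃₂ + S + Z₃`. -/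
theorem stmt15 {V : Type*} [NormedAddCommGroup V] [InnerProductSpace ℝ V]
    (P1 P2 Q N3 γ θ ρ2s α' P2' Q' : ℝ)
    (hP1 : 0 < P1) (hP2 : 0 < P2) (hQ : 0 < Q) (hN3 : 0 < N3)
    (hγ : γ ∈ Set.Icc (0:ℝ) 1) (hθ : θ ∈ Set.Icc (0:ℝ) 1) (hρ2s : ρ2s ∈ Set.Icc (-1:ℝ) 0)
    (hP2' : P2' = θ * P2 * (1 - ρ2s ^ 2))
    (hQ' : Q' = (Real.sqrt Q + ρ2s * Real.sqrt (θ * P2)) ^ 2)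
    (hpos : 0 < P2' + α' ^ 2 * Q')
    (xt1 xt2 s z3 u2 yt3 : V)
    (hxt1 : ⟪xt1, xt1⟫ = γ * P1) (hxt2 : ⟪xt2, xt2⟫ = θ * P2) (hs : ⟪s, s⟫ = Q)
    (hz3 : ⟪z3, z3⟫ = N3)
    (hxt2s : ⟪xt2, s⟫ = ρ2s * Real.sqrt (θ * P2 * Q))
    (hxt1xt2 : ⟪xt1, xt2⟫ = 0) (hxt1s : ⟪xt1, s⟫ = 0) (hxt1z3 : ⟪xt1, z3⟫ = 0)
    (hz3xt2 : ⟪z3, xt2⟫ = 0) (hz3s : ⟪z3, s⟫ = 0)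
    (hu2 : u2 = xt2 + (α' * (1 + ρ2s * Real.sqrt (θ * P2 / Q)) -
      ρ2s * Real.sqrt (θ * P2 / Q)) • s)
    (hyt3 : yt3 = xt2 + s + z3) :
    gMI ![xt1] ![xt1 + yt3] ![u2] =
      (1/2) * Real.logb 2
        (1 + γ * P1 / (N3 + P2' * Q' * (1 - α') ^ 2 / (P2' + α' ^ 2 * Q'))) := by
  obtain ⟨hγ0, -⟩ := hγ
  obtain ⟨hθ0, -⟩ := hθ
  set t := Real.sqrt (θ * P2) with ht
  set q := Real.sqrt Q with hqd
  have hθP2 : (0:ℝ) ≤ θ * P2 := mul_nonneg hθ0 hP2.le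
  have ht2 : t * t = θ * P2 := Real.mul_self_sqrt hθP2
  have hq2 : q * q = Q := Real.mul_self_sqrt hQ.le
  have hq0 : 0 < q := Real.sqrt_pos.mpr hQ
  have hsm : Real.sqrt (θ * P2 * Q) = t * q := Real.sqrt_mul hθP2 Q
  have hsd : Real.sqrt (θ * P2 / Q) = t / q := Real.sqrt_div hθP2 Q
  have hA0 : 0 ≤ P2' := by
    rw [hP2']
    have h1 : ρ2s ^ 2 ≤ 1 := by nlinarith [hρ2s.1, hρ2s.2]
    nlinarith
  have hB0 : 0 ≤ Q' := by rw [hQ']; positivity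
  -- basic inner products
  have hsxt2 : ⟪s, xt2⟫ = ρ2s * (t * q) := by rw [real_inner_comm, hxt2s, hsm]
  have hxt2s' : ⟪xt2, s⟫ = ρ2s * (t * q) := by rw [hxt2s, hsm]
  have hxt2z3 : ⟪xt2, z3⟫ = 0 := by rw [real_inner_comm]; exact hz3xt2
  have hsz3 : ⟪s, z3⟫ = 0 := by rw [real_inner_comm]; exact hz3s
  have hxt2xt1 : ⟪xt2, xt1⟫ = 0 := by rw [real_inner_comm]; exact hxt1xt2
  have hsxt1 : ⟪s, xt1⟫ = 0 := by rw [real_inner_comm]; exact hxt1s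
  have hz3xt1 : ⟪z3, xt1⟫ = 0 := by rw [real_inner_comm]; exact hxt1z3
  -- derived inner products
  have hXU : ⟪xt1, u2⟫ = 0 := by
    rw [hu2]
    simp [inner_add_right, real_inner_smul_right, hxt1xt2, hxt1s]
  have hUX : ⟪u2, xt1⟫ = 0 := by rw [real_inner_comm]; exact hXU
  have hXY3 : ⟪xt1, yt3⟫ = 0 := by
    rw [hyt3]
    simp [inner_add_right, hxt1xt2, hxt1s, hxt1z3]
  have hY3X : ⟪yt3, xt1⟫ = 0 := by rw [real_inner_comm]; exact hXY3
  have hUU : ⟪u2, u2⟫ = P2' + α' ^ 2 * Q' := by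
    rw [hu2]
    simp only [inner_add_left, inner_add_right, real_inner_smul_left,
      real_inner_smul_right, hxt2, hsxt2, hxt2s', hs, hsd]
    rw [hP2', hQ', ← ht2, ← hq2]
    field_simp
    ring
  have hYU : ⟪yt3, u2⟫ = P2' + α' * Q' := by
    rw [hu2, hyt3]
    simp only [inner_add_left, inner_add_right, real_inner_smul_right,
      hxt2, hsxt2, hxt2s', hs, hz3xt2, hz3s, hsd]
    rw [hP2', hQ', ← ht2, ← hq2]
    field_simp
    ring
  have hUY : ⟪u2, yt3⟫ = P2' + α' * Q' := by rw [real_inner_comm]; exact hYU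
  have hYY : ⟪yt3, yt3⟫ = P2' + Q' + N3 := by
    rw [hyt3]
    simp only [inner_add_left, inner_add_right, hxt2, hsxt2, hxt2s', hs, hz3,
      hz3xt2, hz3s, hxt2z3, hsz3]
    rw [hP2', hQ', ← ht2, ← hq2]
    ring
  -- composite ones
  have hXXY : ⟪xt1, xt1 + yt3⟫ = γ * P1 := by
    rw [inner_add_right, hxt1, hXY3, add_zero]
  have hXYX : ⟪xt1 + yt3, xt1⟫ = γ * P1 := by rw [real_inner_comm]; exact hXXY
  have hXYXY : ⟪xt1 + yt3, xt1 + yt3⟫ = γ * P1 + (P2' + Q' + N3) := by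
    rw [inner_add_left, inner_add_right, inner_add_right, hxt1, hXY3, hY3X, hYY]
    ring
  have hXYU : ⟪xt1 + yt3, u2⟫ = P2' + α' * Q' := by
    rw [inner_add_left, hXU, hYU, zero_add]
  have hUXY : ⟪u2, xt1 + yt3⟫ = P2' + α' * Q' := by rw [real_inner_comm]; exact hXYU
  -- rewrite appends
  have e1 : Fin.append ![xt1] ![u2] = ![xt1, u2] := by funext i; fin_cases i <;> rfl
  have e2 : Fin.append ![xt1 + yt3] ![u2] = ![xt1 + yt3, u2] := by
    funext i; fin_cases i <;> rfl
  have e3 : Fin.append ![xt1] (Fin.append ![xt1 + yt3] ![u2]) = ![xt1, xt1 + yt3, u2] := by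
    funext i; fin_cases i <;> rfl
  -- determinants
  have d1 : (gramM ![xt1, u2]).det = γ * P1 * (P2' + α' ^ 2 * Q') := by
    simp [gramM, Matrix.det_fin_two, hxt1, hXU, hUX, hUU, (by rw [← real_inner_self_eq_norm_sq]; exact hxt1 : ‖xt1‖ ^ 2 = γ * P1), (by rw [← real_inner_self_eq_norm_sq]; exact hUU : ‖u2‖ ^ 2 = P2' + α' ^ 2 * Q')]
  have d2 : (gramM ![xt1 + yt3, u2]).det =
      (γ * P1) * (P2' + α' ^ 2 * Q') + (N3 * (P2' + α' ^ 2 * Q') +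
        P2' * Q' * (1 - α') ^ 2) := by
    simp [gramM, Matrix.det_fin_two, hXYXY, hXYU, hUXY, hUU, (by rw [← real_inner_self_eq_norm_sq]; exact hXYXY : ‖xt1 + yt3‖ ^ 2 = γ * P1 + (P2' + Q' + N3)), (by rw [← real_inner_self_eq_norm_sq]; exact hUU : ‖u2‖ ^ 2 = P2' + α' ^ 2 * Q')]
    ring
  have d3 : (gramM ![xt1, xt1 + yt3, u2]).det =
      (γ * P1) * (N3 * (P2' + α' ^ 2 * Q') + P2' * Q' * (1 - α') ^ 2) := by
    simp [gramM, Matrix.det_fin_three, hxt1, hXXY, hXYX, hXU, hUX, hXYXY, hXYU, hUXY, hUU, (by rw [← real_inner_self_eq_norm_sq]; exact hxt1 : ‖xt1‖ ^ 2 = γ * P1), (by rw [← real_inner_self_eq_norm_sq]; exact hXYXY : ‖xt1 + yt3‖ ^ 2 = γ * P1 + (P2' + Q' + N3)), (by rw [← real_inner_self_eq_norm_sq]; exact hUU : ‖u2‖ ^ 2 = P2' + α' ^ 2 * Q')]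
    ring
  have d4 : (gramM ![u2]).det = P2' + α' ^ 2 * Q' := by
    simp [gramM, Matrix.det_fin_one, hUU, (by rw [← real_inner_self_eq_norm_sq]; exact hUU : ‖u2‖ ^ 2 = P2' + α' ^ 2 * Q')]
  rw [gMI, e1, e3, e2, d1, d2, d3, d4]
  congr 1
  have hK : 0 < N3 * (P2' + α' ^ 2 * Q') + P2' * Q' * (1 - α') ^ 2 := by
    have h1 := mul_pos hN3 hpos
    have h2 : 0 ≤ P2' * Q' * (1 - α') ^ 2 :=
      mul_nonneg (mul_nonneg hA0 hB0) (sq_nonneg _)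
    linarith
  rcases eq_or_lt_of_le hγ0 with h0 | hγpos
  · rw [← h0]
    simp
  · have ha : 0 < γ * P1 := mul_pos hγpos hP1
    have hden : 0 < N3 + P2' * Q' * (1 - α') ^ 2 / (P2' + α' ^ 2 * Q') := by
      have h2 : 0 ≤ P2' * Q' * (1 - α') ^ 2 / (P2' + α' ^ 2 * Q') :=
        div_nonneg (mul_nonneg (mul_nonneg hA0 hB0) (sq_nonneg _)) hpos.le
      linarith
    congr 1
    field_simp [ha.ne', hK.ne', hpos.ne', hden.ne']
    ring
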